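/- Suppose that statement Σ holds for every compact Hausdorff countably tight space X: whenever Y ⊆ X with |Y| = ℵ₁ and {W_α}_{α<ω₁}, {V_α}_{α<ω₁} are open subsets of X such that (1) the closure of W_α is included in V_α, (2) |V_α ∩ Y| ≤ ℵ₀, and (3) Y ⊆ ⋃{W_α : α < ω₁}, then Y is σ-closed-discrete in the subspace ⋃{W_α : α < ω₁}. Then in every compact Hausdorff countably tight space, every locally countable subspace of size at most ℵ₁ is σ-discrete. -/

import Mathlib

universe u

/-- The first uncountable ordinal, `ω₁`. -/
noncomputable def omega1 : Ordinal.{0} := (Cardinal.aleph 1).ord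

/-- A space is countably tight if every point in the closure of a set `A` is in the closure of
a countable subset of `A`. -/
def CountablyTight (X : Type u) [TopologicalSpace X] : Prop :=
  ∀ (A : Set X) (x : X), x ∈ closure A → ∃ B ⊆ A, B.Countable ∧ x ∈ closure B

theorem mk_Iio_omega1 : Cardinal.mk ↥(Set.Iio omega1) = Cardinal.lift.{1,0} (Cardinal.aleph 1) := by
  rw [Ordinal.mk_Iio_ordinal, omega1, Cardinal.card_ord]

theorem exists_shrink {X : Type u} [TopologicalSpace X] [CompactSpace X] [T2Space X]
    {y : X} {U : Set X} (hU : IsOpen U) (hy : y ∈ U) :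
    ∃ W : Set X, IsOpen W ∧ y ∈ W ∧ closure W ⊆ U := by
  have hne : U ∈ nhds y := hU.mem_nhds hy
  obtain ⟨s, ⟨hs, hsc⟩, hsU⟩ := (closed_nhds_basis y).mem_iff.mp hne
  exact ⟨interior s, isOpen_interior, mem_interior_iff_mem_nhds.mpr hs,
    (closure_minimal interior_subset hsc).trans hsU⟩

/-- If statement Σ holds for every compact Hausdorff countably tight space — whenever `Y` has
size `ℵ₁` and `{W_α}_{α<ω₁}`, `{V_α}_{α<ω₁}` are open with `cl W_α ⊆ V_α`, `|V_α ∩ Y| ≤ ℵ₀`,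
and `Y ⊆ ⋃ W_α`, then `Y` is σ-closed-discrete in `⋃ W_α` — then in every compact Hausdorff
countably tight space every locally countable subspace of size at most `ℵ₁` is σ-discrete. -/
theorem sigma_implies_sigma_minus
    (hSigma : ∀ (X : Type u) [TopologicalSpace X] [CompactSpace X] [T2Space X],
      CountablyTight X →
      ∀ (Y : Set X), Cardinal.mk Y = Cardinal.aleph 1 →
      ∀ (W V : ↥(Set.Iio omega1) → Set X),
        (∀ α, IsOpen (W α)) → (∀ α, IsOpen (V α)) →
        (∀ α, closure (W α) ⊆ V α) →
        (∀ α, (V α ∩ Y).Countable) →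
        Y ⊆ (⋃ α, W α) →
        ∃ f : ℕ → Set X, (⋃ n, f n) = Y ∧
          ∀ n, (closure (f n) ∩ ⋃ α, W α) ⊆ f n ∧ DiscreteTopology (f n)) :
    ∀ (X : Type u) [TopologicalSpace X] [CompactSpace X] [T2Space X],
      CountablyTight X →
      ∀ (Y : Set X),
        (∀ y ∈ Y, ∃ U : Set X, IsOpen U ∧ y ∈ U ∧ (U ∩ Y).Countable) →
        Cardinal.mk Y ≤ Cardinal.aleph 1 →
        ∃ f : ℕ → Set X, (⋃ n, f n) = Y ∧ ∀ n, DiscreteTopology (f n) := by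
  intro X _ _ _ hct Y hloc hcard
  rcases eq_or_lt_of_le hcard with h | h
  · -- |Y| = ℵ₁ : use Σ
    choose U hUopen hUmem hUcnt using hloc
    choose W hWopen hWmem hWcl using fun (y : X) (hy : y ∈ Y) =>
      exists_shrink (hUopen y hy) (hUmem y hy)
    -- equiv between Iio omega1 and Y
    have hmkeq : Cardinal.lift.{u, 1} (Cardinal.mk ↥(Set.Iio omega1))
        = Cardinal.lift.{1, u} (Cardinal.mk Y) := by
      rw [mk_Iio_omega1, h]; simp [Cardinal.lift_aleph]
    obtain ⟨e⟩ := Cardinal.lift_mk_eq'.mp hmkeq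
    set W' : ↥(Set.Iio omega1) → Set X := fun α => W (e α) (e α).2 with hW'
    set V' : ↥(Set.Iio omega1) → Set X := fun α => U (e α) (e α).2 with hV'
    obtain ⟨f, hf1, hf2⟩ := hSigma X hct Y h W' V'
      (fun α => hWopen _ _) (fun α => hUopen _ _) (fun α => hWcl _ _)
      (fun α => hUcnt _ _)
      (by
        intro y hy
        exact Set.mem_iUnion.mpr ⟨e.symm ⟨y, hy⟩, by
          have := hWmem (e (e.symm ⟨y, hy⟩)) (e (e.symm ⟨y, hy⟩)).2
          simpa using this⟩)
    exact ⟨f, hf1, fun n => (hf2 n).2⟩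
  · -- |Y| < ℵ₁ : Y countable
    have hcnt : Y.Countable := (Cardinal.countable_iff_lt_aleph_one Y).mpr h
    rcases Y.eq_empty_or_nonempty with rfl | ⟨y0, hy0⟩
    · exact ⟨fun _ => ∅, by simp, fun n => by infer_instance⟩
    · obtain ⟨g, hg⟩ := (Set.countable_iff_exists_surjective ⟨y0, hy0⟩).mp hcnt
      refine ⟨fun n => {(g n : X)}, ?_, fun n => by infer_instance⟩
      apply Set.eq_of_subset_of_subset
      · rintro x hx
        obtain ⟨n, rfl⟩ := Set.mem_iUnion.mp hx
        exact (g n).2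
      · intro y hy
        obtain ⟨n, hn⟩ := hg ⟨y, hy⟩
        exact Set.mem_iUnion.mpr ⟨n, by rw [hn]; rfl⟩
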